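/- For all n ≥ j ≥ 0, ŵ_α(n,j) = ∑_{k=j}^n w̃_α(n,k) · W̃_α(k,j), i.e., the translated Whitney-Lah numbers are the sums of products of translated Whitney numbers of the first and second kinds. -/

import Mathlib

open Finset

/-- The translated Whitney numbers of the first kind,
`w̃_α(n,k) = w̃_α(n−1,k−1) + α(n−1)·w̃_α(n−1,k)`. -/
def whitneyFirst {R : Type*} [CommRing R] (α : R) : ℕ → ℕ → R
  | 0, 0 => 1
  | 0, _ + 1 => 0
  | n + 1, 0 => α * n * whitneyFirst α n 0
  | n + 1, k + 1 => whitneyFirst α n k + α * n * whitneyFirst α n (k + 1)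

/-- The translated Whitney numbers of the second kind,
`W̃_α(n,k) = W̃_α(n−1,k−1) + αk·W̃_α(n−1,k)`. -/
def whitneySecond {R : Type*} [CommRing R] (α : R) : ℕ → ℕ → R
  | 0, 0 => 1
  | 0, _ + 1 => 0
  | _ + 1, 0 => 0
  | n + 1, k + 1 => whitneySecond α n k + α * (k + 1) * whitneySecond α n (k + 1)

/-- The translated Whitney-Lah numbers,
`ŵ_α(n,k) = ŵ_α(n−1,k−1) + α(n+k−1)·ŵ_α(n−1,k)`. -/
def whitneyLah {R : Type*} [CommRing R] (α : R) : ℕ → ℕ → R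
  | 0, 0 => 1
  | 0, _ + 1 => 0
  | n + 1, 0 => α * n * whitneyLah α n 0
  | n + 1, k + 1 => whitneyLah α n k + α * (n + k + 1) * whitneyLah α n (k + 1)

lemma whitneySecond_eq_zero {R : Type*} [CommRing R] (α : R) :
    ∀ n k : ℕ, n < k → whitneySecond α n k = 0 := by
  intro n
  induction n with
  | zero => intro k hk; obtain ⟨m, rfl⟩ := Nat.exists_eq_add_of_lt hk; rfl
  | succ n ih =>
    intro k hk
    obtain ⟨m, rfl⟩ : ∃ m, k = m + 1 := ⟨k - 1, by omega⟩
    rw [whitneySecond, ih m (by omega), ih (m+1) (by omega)]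
    ring

lemma whitneyFirst_eq_zero {R : Type*} [CommRing R] (α : R) :
    ∀ n k : ℕ, n < k → whitneyFirst α n k = 0 := by
  intro n
  induction n with
  | zero => intro k hk; obtain ⟨m, rfl⟩ := Nat.exists_eq_add_of_lt hk; rfl
  | succ n ih =>
    intro k hk
    obtain ⟨m, rfl⟩ : ∃ m, k = m + 1 := ⟨k - 1, by omega⟩
    rw [whitneyFirst, ih m (by omega), ih (m+1) (by omega)]
    ring

lemma whitneyLah_key {R : Type*} [CommRing R] (α : R) :
    ∀ n j : ℕ, whitneyLah α n j =
      ∑ k ∈ Finset.range (n+1), whitneyFirst α n k * whitneySecond α k j := by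
  intro n
  induction n with
  | zero =>
    intro j
    cases j with
    | zero => simp [whitneyLah, whitneyFirst, whitneySecond]
    | succ j => simp [whitneyLah, whitneyFirst, whitneySecond]
  | succ n ih =>
    intro j
    rw [Finset.sum_range_succ']
    have hF : ∀ k : ℕ, whitneyFirst α (n+1) (k+1)
        = whitneyFirst α n k + α * n * whitneyFirst α n (k+1) := fun k => rfl
    have hF0 : whitneyFirst α (n+1) 0 = α * n * whitneyFirst α n 0 := rfl
    simp only [hF, hF0, add_mul]
    rw [Finset.sum_add_distrib]
    have hB : (∑ k ∈ Finset.range (n+1),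
          α * (n : R) * whitneyFirst α n (k+1) * whitneySecond α (k+1) j)
        + α * n * whitneyFirst α n 0 * whitneySecond α 0 j
        = α * n * whitneyLah α n j := by
      calc (∑ k ∈ Finset.range (n+1),
              α * (n : R) * whitneyFirst α n (k+1) * whitneySecond α (k+1) j)
            + α * n * whitneyFirst α n 0 * whitneySecond α 0 j
          = ∑ k ∈ Finset.range (n+2), α * (n : R) * whitneyFirst α n k * whitneySecond α k j :=
            (Finset.sum_range_succ'
              (fun k => α * (n : R) * whitneyFirst α n k * whitneySecond α k j) (n+1)).symm
        _ = ∑ k ∈ Finset.range (n+1), α * (n : R) * whitneyFirst α n k * whitneySecond α k j := by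
            rw [Finset.sum_range_succ, whitneyFirst_eq_zero α n (n+1) (by omega)]; ring
        _ = α * n * whitneyLah α n j := by
            rw [ih, Finset.mul_sum]; apply Finset.sum_congr rfl; intros; ring
    cases j with
    | zero =>
      have hA : (∑ k ∈ Finset.range (n+1),
          whitneyFirst α n k * whitneySecond α (k+1) 0) = 0 := by
        have : ∀ k : ℕ, whitneySecond α (k+1) 0 = (0 : R) := fun k => rfl
        simp [this]
      have hL : whitneyLah α (n+1) 0 = α * n * whitneyLah α n 0 := rfl
      rw [hL]
      linear_combination -hA - hB
    | succ j =>
      have hS : ∀ k : ℕ, whitneySecond α (k+1) (j+1)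
          = whitneySecond α k j + α * ((j : R)+1) * whitneySecond α k (j+1) := fun k => rfl
      have hA : (∑ k ∈ Finset.range (n+1),
          whitneyFirst α n k * whitneySecond α (k+1) (j+1))
          = whitneyLah α n j + α * ((j : R)+1) * whitneyLah α n (j+1) := by
        simp only [hS, mul_add, Finset.sum_add_distrib]
        rw [ih, ih (j+1), Finset.mul_sum]
        congr 1
        apply Finset.sum_congr rfl; intros; ring
      rw [whitneyLah]
      push_cast
      linear_combination -hA - hB

/-- For all `n ≥ j ≥ 0`,
`ŵ_α(n,j) = ∑_{k=j}^n w̃_α(n,k) · W̃_α(k,j)`. -/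
theorem whitneyLah_eq_sum_whitney {R : Type*} [CommRing R] (α : R) (n j : ℕ) (hjn : j ≤ n) :
    whitneyLah α n j = ∑ k ∈ Finset.Icc j n, whitneyFirst α n k * whitneySecond α k j := by
  rw [whitneyLah_key]
  symm; apply Finset.sum_subset
  · intro k hk
    rw [Finset.mem_Icc] at hk
    rw [Finset.mem_range]
    omega
  · intro k hk hk'
    rw [Finset.mem_range] at hk
    rw [Finset.mem_Icc] at hk'
    rw [whitneySecond_eq_zero α k j (by omega), mul_zero]
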